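/- arXiv:2301.05361 — 2 statements merged into one kernel-verified Lean document; each statement's English description precedes it below -/
import Mathlib

section
/- Let v : ℝ²₊ → ℝ² be a bounded harmonic map on the upper half-plane, let h ∈ S¹ be a constant unit vector, and suppose ⟨v, h^⊥⟩ = 0 and ∂_n⟨v, h⟩ = 0 on the boundary ∂ℝ²₊. Then v is constant. -/
set_option maxHeartbeats 1000000

open MeasureTheory Set
open scoped RealInnerProductSpace

noncomputable section

abbrev E2 := EuclideanSpace ℝ (Fin 2)

/-- Laplacian of a map on ℝ², via second derivatives along the standard basis. -/
def vlap {F : Type*} [NormedAddCommGroup F] [NormedSpace ℝ F] (f : E2 → F) (x : E2) : F :=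
  ∑ i : Fin 2, fderiv ℝ (fun y => fderiv ℝ f y (EuclideanSpace.single i 1)) x
    (EuclideanSpace.single i 1)

/-- Rotation of a vector in ℝ² by π/2. -/
def perp (v : E2) : E2 := (WithLp.equiv 2 (Fin 2 → ℝ)).symm ![-(v 1), v 0]

section Aux

open intervalIntegral ContinuousLinearMap Complex Asymptotics


lemma cts_deriv (f : ℂ → ℂ) (hf : Differentiable ℂ f) : Continuous (deriv f) := by
  exact (hf.contDiff (n := 1)).continuous_deriv le_rfl

lemma exists_primitive (f : ℂ → ℂ) (hf : Differentiable ℂ f) :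
    ∃ F : ℂ → ℂ, ∀ z, HasDerivAt F (f z) z := by
  refine ⟨fun z => ∫ t in (0:ℝ)..1, z * f (t * z), fun z₀ => ?_⟩
  set R : ℝ := ‖z₀‖ + 1 with hR
  obtain ⟨B1, hB1⟩ := (isCompact_closedBall (0:ℂ) R).exists_bound_of_continuousOn
    hf.continuous.continuousOn
  obtain ⟨B2, hB2⟩ := (isCompact_closedBall (0:ℂ) R).exists_bound_of_continuousOn
    (cts_deriv f hf).continuousOn
  set g : ℝ → ℂ := fun t => f (t * z₀) + z₀ * (deriv f (t * z₀) * t) with hg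
  have hgc : Continuous g := by
    have h1 : Continuous fun t : ℝ => (t : ℂ) * z₀ := by continuity
    exact ((hf.continuous.comp h1)).add
      (continuous_const.mul (((cts_deriv f hf).comp h1).mul Complex.continuous_ofReal))
  have key : HasFDerivAt (fun x : ℂ => ∫ t in (0:ℝ)..1, x * f (t * x))
      (∫ t in (0:ℝ)..1, ContinuousLinearMap.smulRight (1 : ℂ →L[ℂ] ℂ) (g t)) z₀ := by
    apply intervalIntegral.hasFDerivAt_integral_of_dominated_of_fderiv_le
      (F' := fun x t => ContinuousLinearMap.smulRight (1 : ℂ →L[ℂ] ℂ)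
        (f (t * x) + x * (deriv f (t * x) * t)))
      (bound := fun _ => |B1| + R * |B2|) (Metric.ball_mem_nhds z₀ one_pos)
    · filter_upwards with x
      have h1 : Continuous fun t : ℝ => (t : ℂ) * x := Complex.continuous_ofReal.mul continuous_const
      exact ((continuous_const.mul (hf.continuous.comp h1)).aestronglyMeasurable).restrict
    · have h1 : Continuous fun t : ℝ => (t : ℂ) * z₀ := Complex.continuous_ofReal.mul continuous_const
      exact ((continuous_const.mul (hf.continuous.comp h1)).intervalIntegrable) _ _
    · apply Continuous.aestronglyMeasurable ?_ |>.restrict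
      apply (ContinuousLinearMap.smulRightL ℂ ℂ ℂ (1 : ℂ →L[ℂ] ℂ)).continuous.comp
      exact hgc
    · filter_upwards with t ht x hx
      rw [Set.uIoc_of_le (zero_le_one' ℝ)] at ht
      have hxR : ‖x‖ ≤ R := by
        have := mem_ball_iff_norm.mp hx
        have : ‖x‖ ≤ ‖z₀‖ + ‖x - z₀‖ := by
          calc ‖x‖ = ‖z₀ + (x - z₀)‖ := by ring_nf
          _ ≤ ‖z₀‖ + ‖x - z₀‖ := norm_add_le _ _
        linarith [mem_ball_iff_norm.mp hx]
      have habs : |t| ≤ 1 := by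
        rw [abs_le]; exact ⟨by linarith [ht.1], ht.2⟩
      have htx : ‖(t : ℂ) * x‖ ≤ R := by
        rw [norm_mul, Complex.norm_real]
        calc ‖t‖ * ‖x‖ ≤ 1 * R := by
              apply mul_le_mul _ hxR (norm_nonneg _) zero_le_one
              simpa [Real.norm_eq_abs] using habs
          _ = R := one_mul R
      rw [ContinuousLinearMap.norm_smulRight_apply, norm_one, one_mul]
      have ht1 : ‖f ((t:ℂ) * x)‖ ≤ |B1| := le_trans (hB1 _ (by simpa using htx)) (le_abs_self _)
      have ht2 : ‖deriv f ((t:ℂ) * x)‖ ≤ |B2| := le_trans (hB2 _ (by simpa using htx)) (le_abs_self _)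
      calc ‖f ((t:ℂ) * x) + x * (deriv f ((t:ℂ)*x) * t)‖
          ≤ ‖f ((t:ℂ) * x)‖ + ‖x * (deriv f ((t:ℂ)*x) * t)‖ := norm_add_le _ _
        _ ≤ |B1| + R * |B2| := by
            apply add_le_add ht1
            rw [norm_mul, norm_mul, Complex.norm_real]
            calc ‖x‖ * (‖deriv f ((t:ℂ)*x)‖ * ‖t‖) ≤ R * (|B2| * 1) := by
                  apply mul_le_mul hxR _ (by positivity) (by positivity)
                  apply mul_le_mul ht2 (by simpa [Real.norm_eq_abs] using habs) (norm_nonneg _)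
                    (abs_nonneg _)
              _ = R * |B2| := by ring
    · exact intervalIntegrable_const
    · filter_upwards with t ht x hx
      have h1 : HasDerivAt (fun x : ℂ => f ((t:ℂ) * x)) (deriv f ((t:ℂ)*x) * t) x := by
        have := ((hf ((t:ℂ)*x)).hasDerivAt).comp x ((hasDerivAt_id x).const_mul (t:ℂ))
        rw [mul_one] at this
        exact this
      have h2 : HasDerivAt (fun x : ℂ => x * f ((t:ℂ) * x))
          (1 * f ((t:ℂ)*x) + x * (deriv f ((t:ℂ)*x) * t)) x := (hasDerivAt_id x).mul h1
      rw [one_mul] at h2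
      exact h2.hasFDerivAt
  have hgint : IntervalIntegrable g volume 0 1 := hgc.intervalIntegrable _ _
  have hswap : (∫ t in (0:ℝ)..1, ContinuousLinearMap.smulRight (1 : ℂ →L[ℂ] ℂ) (g t))
      = ContinuousLinearMap.smulRight (1 : ℂ →L[ℂ] ℂ) (∫ t in (0:ℝ)..1, g t) := by
    have h := (ContinuousLinearMap.smulRightL ℂ ℂ ℂ (1 : ℂ →L[ℂ] ℂ)).intervalIntegral_comp_comm hgint
    have he : ∀ a : ℂ, (ContinuousLinearMap.smulRightL ℂ ℂ ℂ (1 : ℂ →L[ℂ] ℂ)) a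
        = ContinuousLinearMap.smulRight (1 : ℂ →L[ℂ] ℂ) a := fun a => rfl
    simp only [he] at h
    exact h
  have hval : (∫ t in (0:ℝ)..1, g t) = f z₀ := by
    have : ∀ t ∈ uIcc (0:ℝ) 1, HasDerivAt (fun t : ℝ => (t:ℂ) * f ((t:ℂ) * z₀)) (g t) t := by
      intro t _
      have hψ : HasDerivAt (fun t : ℝ => (t:ℂ) * z₀) z₀ t := by
        simpa using (Complex.ofRealCLM.hasDerivAt (x := t)).mul_const z₀
      have hfc : HasDerivAt (fun t : ℝ => f ((t:ℂ) * z₀)) (deriv f ((t:ℂ)*z₀) * z₀) t := by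
        have := ((hf ((t:ℂ)*z₀)).hasDerivAt).scomp t hψ
        rw [smul_eq_mul, mul_comm] at this
        exact this
      have hid : HasDerivAt (fun t : ℝ => (t : ℂ)) 1 t := by
        simpa using (hasDerivAt_id t).ofReal_comp
      have := HasDerivAt.mul (𝕜 := ℝ) hid hfc
      rw [hg]
      refine this.congr_deriv ?_
      push_cast
      ring
    rw [intervalIntegral.integral_eq_sub_of_hasDerivAt this hgint]
    simp
  rw [hswap, hval] at key
  simpa using key.hasDerivAt


lemma clm_ext_complex {E : Type*} [NormedAddCommGroup E] [NormedSpace ℝ E]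
    {L M : ℂ →L[ℝ] E} (h1 : L 1 = M 1) (hI : L Complex.I = M Complex.I) : L = M := by
  ext z
  have hz : z = z.re • (1 : ℂ) + z.im • Complex.I := by
    simp [Complex.real_smul, Complex.mk_eq_add_mul_I]
  rw [hz, map_add, map_add, L.map_smul, L.map_smul, M.map_smul, M.map_smul, h1, hI]

lemma harmonic_liouville (U : ℂ → ℝ) (U' : ℂ → ℂ →L[ℝ] ℝ) (U'' : ℂ → ℂ →L[ℝ] ℂ →L[ℝ] ℝ)
    (hd1 : ∀ z, HasFDerivAt U (U' z) z)
    (hd2 : ∀ z, HasFDerivAt U' (U'' z) z)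
    (hlap : ∀ z, U'' z 1 1 + U'' z Complex.I Complex.I = 0)
    (M : ℝ) (hM : ∀ z, |U z| ≤ M) : ∀ a b : ℂ, U a = U b := by
  have sym : ∀ z v w, U'' z v w = U'' z w v := fun z =>
    second_derivative_symmetric_of_eventually_of_real (Filter.Eventually.of_forall hd1) (hd2 z)
  set f : ℂ → ℂ := fun z => (↑(U' z 1) : ℂ) - (↑(U' z Complex.I) : ℂ) * Complex.I with hfdef
  -- f is entire
  have hf : ∀ z, HasDerivAt f ((↑(U'' z 1 1) : ℂ) - (↑(U'' z 1 Complex.I) : ℂ) * Complex.I) z := by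
    intro z
    have hp : HasFDerivAt (fun w => U' w 1)
        ((ContinuousLinearMap.apply ℝ ℝ (1:ℂ)).comp (U'' z)) z :=
      (ContinuousLinearMap.apply ℝ ℝ (1:ℂ)).hasFDerivAt.comp z (hd2 z)
    have hq : HasFDerivAt (fun w => U' w Complex.I)
        ((ContinuousLinearMap.apply ℝ ℝ Complex.I).comp (U'' z)) z :=
      (ContinuousLinearMap.apply ℝ ℝ Complex.I).hasFDerivAt.comp z (hd2 z)
    have hf1 : HasFDerivAt (fun w => (↑(U' w 1) : ℂ))
        (Complex.ofRealCLM.comp ((ContinuousLinearMap.apply ℝ ℝ (1:ℂ)).comp (U'' z))) z :=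
      Complex.ofRealCLM.hasFDerivAt.comp z hp
    have hf2 : HasFDerivAt (fun w => (↑(U' w Complex.I) : ℂ))
        (Complex.ofRealCLM.comp ((ContinuousLinearMap.apply ℝ ℝ Complex.I).comp (U'' z))) z :=
      Complex.ofRealCLM.hasFDerivAt.comp z hq
    have hf2I := hf2.mul_const Complex.I
    have hF := hf1.sub hf2I
    set c : ℂ := (↑(U'' z 1 1) : ℂ) - (↑(U'' z 1 Complex.I) : ℂ) * Complex.I with hc
    rw [hasDerivAt_iff_hasFDerivAt]
    apply hasFDerivAt_of_restrictScalars ℝ hF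
    apply clm_ext_complex
    · simp only [ContinuousLinearMap.coe_restrictScalars', ContinuousLinearMap.smulRight_apply,
        ContinuousLinearMap.one_apply, ContinuousLinearMap.coe_comp', Function.comp_apply,
        ContinuousLinearMap.coe_sub', Pi.sub_apply, ContinuousLinearMap.smul_apply,
        ContinuousLinearMap.apply_apply, Complex.ofRealCLM_apply, smul_eq_mul, hc,
          ContinuousLinearMap.toSpanSingleton_apply_one]
      ring
    · have hII : U'' z Complex.I Complex.I = -(U'' z 1 1) := by
        have := hlap z; linarith
      have hI1 : U'' z Complex.I 1 = U'' z 1 Complex.I := sym z _ _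
      simp only [ContinuousLinearMap.coe_restrictScalars', ContinuousLinearMap.smulRight_apply,
        ContinuousLinearMap.one_apply, ContinuousLinearMap.coe_comp', Function.comp_apply,
        ContinuousLinearMap.coe_sub', Pi.sub_apply, ContinuousLinearMap.smul_apply,
        ContinuousLinearMap.apply_apply, Complex.ofRealCLM_apply, smul_eq_mul, hc, hII, hI1,
          ContinuousLinearMap.toSpanSingleton_apply]
      push_cast
      ring_nf
      simp only [Complex.I_sq]
      ring
  have hdiff : Differentiable ℂ f := fun z => (hf z).differentiableAt
  obtain ⟨F, hF⟩ := exists_primitive f hdiff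
  -- U - Re F is constant
  have hre : ∀ z, HasFDerivAt (fun w => (F w).re)
      (Complex.reCLM.comp ((ContinuousLinearMap.smulRight (1 : ℂ →L[ℂ] ℂ) (f z)).restrictScalars ℝ)) z :=
    fun z => Complex.reCLM.hasFDerivAt.comp z ((hF z).hasFDerivAt.restrictScalars ℝ)
  have hsub : ∀ z, HasFDerivAt (fun w => U w - (F w).re) (0 : ℂ →L[ℝ] ℝ) z := by
    intro z
    have h := (hd1 z).sub (hre z)
    refine h.congr_fderiv ?_
    symm
    apply clm_ext_complex
    · simp [hfdef]
    · simp [hfdef, Complex.mul_re]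
  have hconst : ∀ x y : ℂ, U x - (F x).re = U y - (F y).re := by
    intro x y
    apply is_const_of_fderiv_eq_zero (𝕜 := ℝ) (fun z => (hsub z).differentiableAt)
    intro z
    exact (hsub z).fderiv
  set k : ℝ := U 0 - (F 0).re with hk
  have hReF : ∀ z, (F z).re = U z - k := by
    intro z
    have := hconst z 0
    rw [← hk] at this
    linarith
  -- exp ∘ F is bounded entire
  have hexp : Differentiable ℂ (fun z => Complex.exp (F z)) :=
    fun z => ((hF z).cexp).differentiableAt
  have hbd : Bornology.IsBounded (Set.range fun z => Complex.exp (F z)) := by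
    rw [Metric.isBounded_iff_subset_closedBall 0]
    refine ⟨Real.exp (M - k), ?_⟩
    rintro _ ⟨z, rfl⟩
    simp only [Metric.mem_closedBall, dist_zero_right, Complex.norm_exp]
    apply Real.exp_le_exp.mpr
    rw [hReF z]
    have := (abs_le.mp (hM z)).2
    linarith
  have hec : ∀ z, Complex.exp (F z) = Complex.exp (F 0) := fun z =>
    hexp.apply_eq_apply_of_bounded hbd z 0
  have hf0 : ∀ z, f z = 0 := by
    intro z
    have h1 : HasDerivAt (fun w => Complex.exp (F w)) (Complex.exp (F z) * f z) z := (hF z).cexp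
    have h2 : HasDerivAt (fun w => Complex.exp (F w)) 0 z := by
      have : (fun w => Complex.exp (F w)) = fun _ => Complex.exp (F 0) := funext hec
      rw [this]; exact hasDerivAt_const _ _
    have := h1.unique h2
    exact (mul_eq_zero.mp this).resolve_left (Complex.exp_ne_zero _)
  -- hence U' = 0 and U constant
  have hU'0 : ∀ z, U' z = 0 := by
    intro z
    have h1 : U' z 1 = 0 := by
      have := congrArg Complex.re (hf0 z)
      simpa [hfdef] using this
    have hI : U' z Complex.I = 0 := by
      have := congrArg Complex.im (hf0 z)
      simpa [hfdef] using this
    apply clm_ext_complex <;> simp [h1, hI]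
  intro a b
  apply is_const_of_fderiv_eq_zero (𝕜 := ℝ) (fun z => (hd1 z).differentiableAt)
  intro z
  rw [(hd1 z).fderiv, hU'0 z]


section Reflect

variable (u : ℂ → ℝ)

/-- conjugation as a real CLM on ℂ -/
noncomputable def Rc : ℂ →L[ℝ] ℂ := (Complex.conjCLE : ℂ ≃L[ℝ] ℂ)

lemma Rc_apply (z : ℂ) : Rc z = (starRingEnd ℂ) z := rfl

lemma Rc_norm_le : ‖Rc‖ ≤ 1 := by
  apply ContinuousLinearMap.opNorm_le_bound _ zero_le_one
  intro z
  simp [Rc_apply, Complex.norm_conj]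

/-- postcomposition with Rc -/
noncomputable def Pc : (ℂ →L[ℝ] ℝ) →L[ℝ] (ℂ →L[ℝ] ℝ) :=
  (ContinuousLinearMap.compL ℝ ℂ ℂ ℝ).flip Rc

lemma Pc_apply (L : ℂ →L[ℝ] ℝ) : Pc L = L.comp Rc := rfl

lemma reflect_liouville (hu : ContDiff ℝ 2 u) (ε : ℝ) (hε : |ε| = 1)
    (hlap : ∀ z : ℂ, 0 < z.im →
      fderiv ℝ (fderiv ℝ u) z 1 1 + fderiv ℝ (fderiv ℝ u) z Complex.I Complex.I = 0)
    (h0 : ∀ x : ℝ, ε • u x = u x)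
    (h1 : ∀ (x : ℝ) (h : ℂ), ε • fderiv ℝ u x ((starRingEnd ℂ) h) = fderiv ℝ u x h)
    (h2 : ∀ (x : ℝ) (h k : ℂ), ε • fderiv ℝ (fderiv ℝ u) x ((starRingEnd ℂ) h) ((starRingEnd ℂ) k)
      = fderiv ℝ (fderiv ℝ u) x h k)
    (M : ℝ) (hM : ∀ z : ℂ, 0 ≤ z.im → |u z| ≤ M) :
    ∀ a b : ℂ, 0 ≤ a.im → 0 ≤ b.im → u a = u b := by
  have hud : Differentiable ℝ u := hu.differentiable (by norm_num)
  have hu1 : ContDiff ℝ 1 (fderiv ℝ u) := hu.fderiv_right (by norm_num)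
  have hu1d : Differentiable ℝ (fderiv ℝ u) := hu1.differentiable one_ne_zero
  have hu2c : Continuous (fderiv ℝ (fderiv ℝ u)) := hu1.continuous_fderiv one_ne_zero
  set c : ℂ → ℂ := fun z => (starRingEnd ℂ) z with hc
  set u' : ℂ → ℂ →L[ℝ] ℝ := fderiv ℝ u with hu'
  set u'' : ℂ → ℂ →L[ℝ] ℂ →L[ℝ] ℝ := fderiv ℝ (fderiv ℝ u) with hu''
  set U : ℂ → ℝ := fun z => if z.im < 0 then ε • u (c z) else u z with hU
  set U' : ℂ → ℂ →L[ℝ] ℝ := fun z => if z.im < 0 then ε • ((u' (c z)).comp Rc) else u' z with hU'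
  set U'' : ℂ → ℂ →L[ℝ] ℂ →L[ℝ] ℝ :=
    fun z => if z.im < 0 then ε • (Pc.comp ((u'' (c z)).comp Rc)) else u'' z with hU''
  -- real boundary points: z = (z.re : ℂ)
  have hreal : ∀ z : ℂ, z.im = 0 → ((z.re : ℝ) : ℂ) = z := by
    intro z hz; exact Complex.ext (by simp) (by simp [hz])
  have hcreal : ∀ z : ℂ, z.im = 0 → c z = z := by
    intro z hz; simp [hc, Complex.ext_iff, hz]
  have hconj_add : ∀ a b : ℂ, c (a + b) = c a + c b := fun a b => by simp [hc]
  -- upper and lower open cases, boundary case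
  have hd1 : ∀ z : ℂ, HasFDerivAt U (U' z) z := by
    intro z
    rcases lt_trichotomy z.im 0 with hz | hz | hz
    · -- lower
      have hmem : {w : ℂ | w.im < 0} ∈ nhds z := (isOpen_lt Complex.continuous_im continuous_const).mem_nhds hz
      have hev : (fun w => ε • u (c w)) =ᶠ[nhds z] U := by
        filter_upwards [hmem] with w hw
        simp only [hU, if_pos hw]
      have hbase : HasFDerivAt (fun w => ε • u (c w)) (ε • ((u' (c z)).comp Rc)) z := by
        have hconj : HasFDerivAt c Rc z := Complex.conjCLE.hasFDerivAt
        have := ((hud (c z)).hasFDerivAt.comp z hconj).const_smul ε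
        exact this
      have hthis := hbase.congr_of_eventuallyEq hev.symm
      simp only [hU', if_pos hz]
      exact hthis
    · -- boundary
      rw [hasFDerivAt_iff_isLittleO_nhds_zero]
      have hA : (fun h => u (z + h) - u z - u' z h) =o[nhds 0] (fun h : ℂ => h) := by
        have := (hud z).hasFDerivAt
        rwa [hasFDerivAt_iff_isLittleO_nhds_zero] at this
      have hAc : (fun h : ℂ => u (z + c h) - u z - u' z (c h)) =o[nhds 0] (fun h : ℂ => h) := by
        have htc : Filter.Tendsto c (nhds (0:ℂ)) (nhds (0:ℂ)) := by
          have : Continuous c := Complex.conjCLE.continuous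
          simpa [hc] using this.tendsto 0
        have := hA.comp_tendsto htc
        apply this.trans_isBigO
        apply Asymptotics.isBigO_of_le
        intro x
        simp [hc]
      have hsum := (hA.norm_left.add hAc.norm_left)
      apply Asymptotics.IsBigO.trans_isLittleO _ hsum
      apply Asymptotics.isBigO_of_le
      intro h
      have hUz : U z = u z := by simp [hU, hz]
      have hU'z : U' z = u' z := by simp [hU', hz]
      rw [hU'z]
      rcases lt_or_ge (z + h).im 0 with hzh | hzh
      · have h1' : u' z h = ε • u' z (c h) := by
          have := h1 z.re h
          rw [hreal z hz] at this
          exact this.symm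
        have hUzh : U (z + h) = ε • u (z + c h) := by
          rw [hU]; simp only [if_pos hzh]
          congr 1
          rw [hconj_add, hcreal z hz]
        have h0' : ε • u z = u z := by rw [← hreal z hz]; exact h0 z.re
        have hL : U (z + h) - U z - u' z h = ε • (u (z + c h) - u z - u' z (c h)) := by
          rw [hUzh, hUz, h1', smul_sub, smul_sub, h0']
        rw [hL, norm_smul]
        have hε' : ‖ε‖ = 1 := by rwa [Real.norm_eq_abs]
        rw [hε', one_mul]
        simp only [Real.norm_eq_abs]
        have hn1 := abs_nonneg (u (z + h) - u z - u' z h)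
        have hn2 := abs_nonneg (u (z + c h) - u z - u' z (c h))
        have habs : |(|u (z + h) - u z - u' z h| + |u (z + c h) - u z - u' z (c h)|)|
            = |u (z + h) - u z - u' z h| + |u (z + c h) - u z - u' z (c h)| := abs_of_nonneg (by linarith)
        rw [habs]
        linarith
      · have hUzh : U (z + h) = u (z + h) := by rw [hU]; simp only [if_neg (not_lt.mpr hzh)]
        rw [hUzh, hUz]
        simp only [Real.norm_eq_abs]
        have hn1 := abs_nonneg (u (z + h) - u z - u' z h)
        have hn2 := abs_nonneg (u (z + c h) - u z - u' z (c h))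
        have habs : |(|u (z + h) - u z - u' z h| + |u (z + c h) - u z - u' z (c h)|)|
            = |u (z + h) - u z - u' z h| + |u (z + c h) - u z - u' z (c h)| := abs_of_nonneg (by linarith)
        rw [habs]
        linarith
    · -- upper
      have hmem : {w : ℂ | 0 < w.im} ∈ nhds z := (isOpen_lt continuous_const Complex.continuous_im).mem_nhds hz
      have hev : u =ᶠ[nhds z] U := by
        filter_upwards [hmem] with w hw
        simp only [hU, if_neg (not_lt.mpr (le_of_lt hw))]
      have hthis := (hud z).hasFDerivAt.congr_of_eventuallyEq hev.symm
      simp only [hU', if_neg (not_lt.mpr (le_of_lt hz))]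
      exact hthis
  have hd2 : ∀ z : ℂ, HasFDerivAt U' (U'' z) z := by
    intro z
    rcases lt_trichotomy z.im 0 with hz | hz | hz
    · -- lower
      have hmem : {w : ℂ | w.im < 0} ∈ nhds z :=
        (isOpen_lt Complex.continuous_im continuous_const).mem_nhds hz
      have hev : (fun w => ε • ((u' (c w)).comp Rc)) =ᶠ[nhds z] U' := by
        filter_upwards [hmem] with w hw
        simp only [hU', if_pos hw]
      have hconj : HasFDerivAt c Rc z := Complex.conjCLE.hasFDerivAt
      have hbase0 : HasFDerivAt (fun w => u' (c w)) ((u'' (c z)).comp Rc) z :=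
        (hu1d (c z)).hasFDerivAt.comp z hconj
      have hbase1 : HasFDerivAt (fun w => Pc (u' (c w))) (Pc.comp ((u'' (c z)).comp Rc)) z :=
        Pc.hasFDerivAt.comp z hbase0
      have hbase : HasFDerivAt (fun w => ε • ((u' (c w)).comp Rc))
          (ε • (Pc.comp ((u'' (c z)).comp Rc))) z := hbase1.const_smul ε
      have hthis := hbase.congr_of_eventuallyEq hev.symm
      simp only [hU'', if_pos hz]
      exact hthis
    · -- boundary
      simp only [hU'', if_neg (by rw [hz]; exact lt_irrefl 0 : ¬ z.im < 0)]
      rw [hasFDerivAt_iff_isLittleO_nhds_zero]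
      have hA : (fun h => u' (z + h) - u' z - u'' z h) =o[nhds 0] (fun h : ℂ => h) := by
        have := (hu1d z).hasFDerivAt
        rwa [hasFDerivAt_iff_isLittleO_nhds_zero] at this
      have hAc : (fun h : ℂ => u' (z + c h) - u' z - u'' z (c h)) =o[nhds 0] (fun h : ℂ => h) := by
        have htc : Filter.Tendsto c (nhds (0:ℂ)) (nhds (0:ℂ)) := by
          have : Continuous c := Complex.conjCLE.continuous
          simpa [hc] using this.tendsto 0
        have := hA.comp_tendsto htc
        apply this.trans_isBigO
        apply Asymptotics.isBigO_of_le
        intro x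
        simp [hc]
      have hsum := (hA.norm_left.add hAc.norm_left)
      apply Asymptotics.IsBigO.trans_isLittleO _ hsum
      apply Asymptotics.isBigO_of_le
      intro h
      have hU'z : U' z = u' z := by simp [hU', hz]
      rcases lt_or_ge (z + h).im 0 with hzh | hzh
      · have hE : U' (z + h) = ε • ((u' (z + c h)).comp Rc) := by
          rw [hU']; simp only [if_pos hzh]
          congr 2
          rw [hconj_add, hcreal z hz]
        have hL : U' (z + h) - U' z - u'' z h
            = ε • ((u' (z + c h) - u' z - u'' z (c h)).comp Rc) := by
          apply ContinuousLinearMap.ext; intro k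
          have e1 : U' (z + h) k = ε * u' (z + c h) (c k) := by
            rw [hE]; simp [Rc_apply, hc]
          have e3 : ε * u' z (c k) = u' z k := by
            have := h1 z.re k; rw [hreal z hz] at this; simpa [hc] using this
          have e4 : ε * u'' z (c h) (c k) = u'' z h k := by
            have := h2 z.re h k; rw [hreal z hz] at this; simpa [hc] using this
          simp only [ContinuousLinearMap.sub_apply, ContinuousLinearMap.smul_apply,
            ContinuousLinearMap.coe_comp', Function.comp_apply, hU'z, e1, smul_eq_mul,
            Rc_apply]
          have : Rc k = c k := rfl
          rw [this] at *
          ring_nf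
          ring_nf at e3 e4
          linarith [e3, e4]
        rw [hL, norm_smul ε ((u' (z + c h) - u' z - u'' z (c h)).comp Rc)]
        have hε' : ‖ε‖ = 1 := by rwa [Real.norm_eq_abs]
        rw [hε', one_mul]
        have hcomp : ‖(u' (z + c h) - u' z - u'' z (c h)).comp Rc‖
            ≤ ‖u' (z + c h) - u' z - u'' z (c h)‖ := by
          calc ‖(u' (z + c h) - u' z - u'' z (c h)).comp Rc‖
              ≤ ‖u' (z + c h) - u' z - u'' z (c h)‖ * ‖Rc‖ :=
                ContinuousLinearMap.opNorm_comp_le _ _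
            _ ≤ ‖u' (z + c h) - u' z - u'' z (c h)‖ * 1 := by
                apply mul_le_mul_of_nonneg_left Rc_norm_le (norm_nonneg _)
            _ = _ := mul_one _
        have hn1 := norm_nonneg (u' (z + h) - u' z - u'' z h)
        have hn2 := norm_nonneg (u' (z + c h) - u' z - u'' z (c h))
        have habs : ‖(‖u' (z + h) - u' z - u'' z h‖ + ‖u' (z + c h) - u' z - u'' z (c h)‖)‖
            = ‖u' (z + h) - u' z - u'' z h‖ + ‖u' (z + c h) - u' z - u'' z (c h)‖ := by
          rw [Real.norm_eq_abs]; exact abs_of_nonneg (by linarith)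
        rw [habs]
        linarith
      · have hE : U' (z + h) = u' (z + h) := by
          rw [hU']; simp only [if_neg (not_lt.mpr hzh)]
        rw [hE, hU'z]
        have hn1 := norm_nonneg (u' (z + h) - u' z - u'' z h)
        have hn2 := norm_nonneg (u' (z + c h) - u' z - u'' z (c h))
        have habs : ‖(‖u' (z + h) - u' z - u'' z h‖ + ‖u' (z + c h) - u' z - u'' z (c h)‖)‖
            = ‖u' (z + h) - u' z - u'' z h‖ + ‖u' (z + c h) - u' z - u'' z (c h)‖ := by
          rw [Real.norm_eq_abs]; exact abs_of_nonneg (by linarith)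
        rw [habs]
        linarith
    · -- upper
      have hmem : {w : ℂ | 0 < w.im} ∈ nhds z :=
        (isOpen_lt continuous_const Complex.continuous_im).mem_nhds hz
      have hev : u' =ᶠ[nhds z] U' := by
        filter_upwards [hmem] with w hw
        simp only [hU', if_neg (not_lt.mpr (le_of_lt hw))]
      have hthis := (hu1d z).hasFDerivAt.congr_of_eventuallyEq hev.symm
      simp only [hU'', if_neg (not_lt.mpr (le_of_lt hz))]
      exact hthis
  have hlapU : ∀ z : ℂ, U'' z 1 1 + U'' z Complex.I Complex.I = 0 := by
    intro z
    rcases lt_trichotomy z.im 0 with hz | hz | hz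
    · simp only [hU'', if_pos hz]
      have e1 : (ε • Pc.comp ((u'' (c z)).comp Rc)) 1 1 = ε * u'' (c z) 1 1 := by
        simp only [ContinuousLinearMap.smul_apply, ContinuousLinearMap.comp_apply, Pc_apply,
          smul_eq_mul, Rc_apply, map_one]
      have e2 : (ε • Pc.comp ((u'' (c z)).comp Rc)) Complex.I Complex.I
          = ε * u'' (c z) Complex.I Complex.I := by
        simp only [ContinuousLinearMap.smul_apply, ContinuousLinearMap.comp_apply, Pc_apply,
          smul_eq_mul, Rc_apply, Complex.conj_I, map_neg, ContinuousLinearMap.neg_apply,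
          neg_neg]
      rw [e1, e2, ← mul_add]
      have him : 0 < (c z).im := by
        have : (c z).im = -z.im := by simp [hc]
        rw [this]; linarith
      rw [hlap (c z) him, mul_zero]
    · simp only [hU'', if_neg (by rw [hz]; exact lt_irrefl 0 : ¬ z.im < 0)]
      have hcurve : Continuous fun t : ℝ => z + t • Complex.I :=
        continuous_const.add (continuous_id.smul continuous_const)
      set g : ℝ → ℝ := fun t => u'' (z + t • Complex.I) 1 1 + u'' (z + t • Complex.I) I I with hg
      have hgc : Continuous g := by
        apply Continuous.add
        · exact (ContinuousLinearMap.apply ℝ ℝ (1:ℂ)).continuous.comp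
            ((ContinuousLinearMap.apply ℝ (ℂ →L[ℝ] ℝ) (1:ℂ)).continuous.comp (hu2c.comp hcurve))
        · exact (ContinuousLinearMap.apply ℝ ℝ Complex.I).continuous.comp
            ((ContinuousLinearMap.apply ℝ (ℂ →L[ℝ] ℝ) Complex.I).continuous.comp (hu2c.comp hcurve))
      have ht1 : Filter.Tendsto g (nhdsWithin 0 (Set.Ioi 0)) (nhds (g 0)) :=
        (hgc.continuousAt).continuousWithinAt.tendsto
      have hzero : g =ᶠ[nhdsWithin 0 (Set.Ioi 0)] fun _ => 0 := by
        apply Filter.eventually_of_mem self_mem_nhdsWithin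
        intro t ht
        apply hlap
        simp only [Complex.add_im, Complex.smul_im, Complex.I_im, hz]
        simpa using ht
      have ht2 : Filter.Tendsto g (nhdsWithin 0 (Set.Ioi 0)) (nhds 0) := by
        rw [Filter.tendsto_congr' hzero]
        exact tendsto_const_nhds
      have : g 0 = 0 := tendsto_nhds_unique ht1 ht2
      simpa [hg] using this
    · simp only [hU'', if_neg (not_lt.mpr (le_of_lt hz))]
      exact hlap z hz
  have MU : ∀ z : ℂ, |U z| ≤ M := by
    intro z
    rcases lt_or_ge z.im 0 with hz | hz
    · simp only [hU, if_pos hz]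
      rw [smul_eq_mul, abs_mul, hε, one_mul]
      apply hM
      have : (c z).im = -z.im := by simp [hc]
      rw [this]; linarith
    · simp only [hU, if_neg (not_lt.mpr hz)]
      exact hM z hz
  intro a b ha hb
  have := harmonic_liouville U U' U'' hd1 hd2 hlapU M MU a b
  simp only [hU, if_neg (not_lt.mpr ha), if_neg (not_lt.mpr hb)] at this
  exact this

end Reflect


/-- the identification ℂ →L E2 -/
def iotaL : ℂ →L[ℝ] E2 :=
  (Complex.reCLM.smulRight (EuclideanSpace.single 0 (1:ℝ))) +
  (Complex.imCLM.smulRight (EuclideanSpace.single 1 (1:ℝ)))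

lemma iotaL_apply (z : ℂ) (i : Fin 2) : iotaL z i = ![z.re, z.im] i := by
  fin_cases i <;>
    simp [iotaL, EuclideanSpace.single_apply]

lemma iotaL_one : iotaL 1 = EuclideanSpace.single 0 (1:ℝ) := by
  ext i
  fin_cases i <;> simp [iotaL_apply, EuclideanSpace.single_apply]

lemma iotaL_I : iotaL Complex.I = EuclideanSpace.single 1 (1:ℝ) := by
  ext i
  fin_cases i <;> simp [iotaL_apply, EuclideanSpace.single_apply]

lemma iotaL_im (z : ℂ) : iotaL z 1 = z.im := by simp [iotaL_apply]

lemma iotaL_surj (x : E2) : iotaL (Complex.mk (x 0) (x 1)) = x := by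
  ext i
  fin_cases i <;> simp [iotaL_apply]

lemma decomp (h : E2) (hh : ‖h‖ = 1) (a : E2) :
    a = ⟪a, h⟫ • h + ⟪a, perp h⟫ • perp h := by
  have h2 : (⟪h, h⟫ : ℝ) = 1 := by
    rw [real_inner_self_eq_norm_sq, hh]; norm_num
  rw [PiLp.inner_apply] at h2
  simp only [RCLike.inner_apply, conj_trivial, Fin.sum_univ_two] at h2
  have hp0 : perp h 0 = -(h 1) := by simp [perp]
  have hp1 : perp h 1 = h 0 := by simp [perp]
  ext i
  have e1 : (⟪a, h⟫ • h + ⟪a, perp h⟫ • perp h) i = ⟪a, h⟫ * h i + ⟪a, perp h⟫ * perp h i := by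
    simp
  rw [e1, PiLp.inner_apply, PiLp.inner_apply]
  simp only [RCLike.inner_apply, conj_trivial, Fin.sum_univ_two, hp0, hp1]
  fin_cases i
  · simp [hp0, hp1]
    linear_combination (-(a 0)) * h2
  · simp [hp0, hp1]
    linear_combination (-(a 1)) * h2


lemma complex_decomp (a : ℂ) : a = a.re • (1 : ℂ) + a.im • Complex.I := by
  simp [Complex.real_smul, Complex.mk_eq_add_mul_I]

lemma lin_expand (L : ℂ →L[ℝ] ℝ) (a : ℂ) : L a = a.re * L 1 + a.im * L Complex.I := by
  have key : ∀ p q : ℝ, L (p • (1:ℂ) + q • Complex.I) = p * L 1 + q * L Complex.I := by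
    intro p q
    rw [map_add, L.map_smul, L.map_smul]
    simp [smul_eq_mul]
  calc L a = L (a.re • (1:ℂ) + a.im • Complex.I) := by rw [← complex_decomp]
    _ = _ := key _ _

lemma bilin_expand (B : ℂ →L[ℝ] ℂ →L[ℝ] ℝ) (a b : ℂ) :
    B a b = a.re * b.re * (B 1 1) + a.re * b.im * (B 1 Complex.I)
      + a.im * b.re * (B Complex.I 1) + a.im * b.im * (B Complex.I Complex.I) := by
  have key : ∀ p q r s : ℝ, B (p • (1:ℂ) + q • Complex.I) (r • (1:ℂ) + s • Complex.I)
      = p*r*(B 1 1) + p*s*(B 1 Complex.I) + q*r*(B Complex.I 1) + q*s*(B Complex.I Complex.I) := by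
    intro p q r s
    simp only [map_add, _root_.map_smul, ContinuousLinearMap.add_apply,
      ContinuousLinearMap.smul_apply, ContinuousLinearMap.coe_smul', Pi.smul_apply, smul_eq_mul]
    ring
  calc B a b = B (a.re • (1:ℂ) + a.im • Complex.I) (b.re • (1:ℂ) + b.im • Complex.I) := by
        rw [← complex_decomp, ← complex_decomp]
    _ = _ := key _ _ _ _

lemma line_deriv_zero (g : ℂ → ℝ) (hg : Differentiable ℝ g) (hz : ∀ s : ℝ, g s = 0) (s : ℝ) :
    fderiv ℝ g s 1 = 0 := by
  have hφ : HasFDerivAt (fun t : ℝ => g t) ((fderiv ℝ g (s:ℂ)).comp Complex.ofRealCLM) s :=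
    (hg (s:ℂ)).hasFDerivAt.comp s Complex.ofRealCLM.hasFDerivAt
  have h0 : HasFDerivAt (fun t : ℝ => g t) (0 : ℝ →L[ℝ] ℝ) s := by
    have hzero : (fun t : ℝ => g t) = fun _ => 0 := funext hz
    rw [hzero]; exact hasFDerivAt_const 0 s
  have huniq := hφ.unique h0
  have h1 := congrFun (congrArg DFunLike.coe huniq) 1
  simpa using h1

lemma lap_boundary (f : ℂ → ℝ) (hf : ContDiff ℝ 2 f)
    (hlap : ∀ z : ℂ, 0 < z.im →
      fderiv ℝ (fderiv ℝ f) z 1 1 + fderiv ℝ (fderiv ℝ f) z Complex.I Complex.I = 0) :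
    ∀ z : ℂ, z.im = 0 →
      fderiv ℝ (fderiv ℝ f) z 1 1 + fderiv ℝ (fderiv ℝ f) z Complex.I Complex.I = 0 := by
  intro z hz
  have hu2c : Continuous (fderiv ℝ (fderiv ℝ f)) :=
    (hf.fderiv_right (m := 1) (by norm_num)).continuous_fderiv one_ne_zero
  have hcurve : Continuous fun t : ℝ => z + t • Complex.I :=
    continuous_const.add (continuous_id.smul continuous_const)
  set g : ℝ → ℝ := fun t => fderiv ℝ (fderiv ℝ f) (z + t • Complex.I) 1 1
    + fderiv ℝ (fderiv ℝ f) (z + t • Complex.I) Complex.I Complex.I with hg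
  have hgc : Continuous g := by
    apply Continuous.add
    · exact (ContinuousLinearMap.apply ℝ ℝ (1:ℂ)).continuous.comp
        ((ContinuousLinearMap.apply ℝ (ℂ →L[ℝ] ℝ) (1:ℂ)).continuous.comp (hu2c.comp hcurve))
    · exact (ContinuousLinearMap.apply ℝ ℝ Complex.I).continuous.comp
        ((ContinuousLinearMap.apply ℝ (ℂ →L[ℝ] ℝ) Complex.I).continuous.comp (hu2c.comp hcurve))
  have ht1 : Filter.Tendsto g (nhdsWithin 0 (Set.Ioi 0)) (nhds (g 0)) :=
    (hgc.continuousAt).continuousWithinAt.tendsto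
  have hzero : g =ᶠ[nhdsWithin 0 (Set.Ioi 0)] fun _ => 0 := by
    apply Filter.eventually_of_mem self_mem_nhdsWithin
    intro t ht
    apply hlap
    simp only [Complex.add_im, Complex.smul_im, Complex.I_im, hz]
    simpa using ht
  have ht2 : Filter.Tendsto g (nhdsWithin 0 (Set.Ioi 0)) (nhds 0) := by
    rw [Filter.tendsto_congr' hzero]
    exact tendsto_const_nhds
  have hg0 : g 0 = 0 := tendsto_nhds_unique ht1 ht2
  simpa [hg] using hg0

section Transfer

variable (v : E2 → E2) (e : E2)

/-- transferred scalar function -/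
def uu : ℂ → ℝ := fun z => (innerSL ℝ e) (v (iotaL z))

variable {v e}

lemma uu_contDiff (hsm : ContDiff ℝ 2 v) : ContDiff ℝ 2 (uu v e) :=
  (innerSL ℝ e).contDiff.comp (hsm.comp iotaL.contDiff)

lemma uu_hasFDerivAt (hsm : ContDiff ℝ 2 v) (z : ℂ) :
    HasFDerivAt (uu v e) (((innerSL ℝ e).comp (fderiv ℝ v (iotaL z))).comp iotaL) z :=
  ((innerSL ℝ e).hasFDerivAt.comp z
    (((hsm.differentiable (by norm_num)) (iotaL z)).hasFDerivAt.comp z iotaL.hasFDerivAt))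

lemma uu_fderiv (hsm : ContDiff ℝ 2 v) :
    fderiv ℝ (uu v e) = fun z => ((innerSL ℝ e).comp (fderiv ℝ v (iotaL z))).comp iotaL :=
  funext fun z => (uu_hasFDerivAt hsm z).fderiv

/-- CLM for second-derivative transfer -/
def Lam (e : E2) : (E2 →L[ℝ] E2) →L[ℝ] (ℂ →L[ℝ] ℝ) :=
  ((ContinuousLinearMap.compL ℝ ℂ E2 ℝ).flip iotaL).comp
    (ContinuousLinearMap.compL ℝ E2 E2 ℝ (innerSL ℝ e))

lemma Lam_apply (D : E2 →L[ℝ] E2) : Lam e D = ((innerSL ℝ e).comp D).comp iotaL := rfl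

lemma uu_hasFDerivAt2 (hsm : ContDiff ℝ 2 v) (z : ℂ) :
    HasFDerivAt (fderiv ℝ (uu v e))
      ((Lam e).comp ((fderiv ℝ (fderiv ℝ v) (iotaL z)).comp iotaL)) z := by
  rw [uu_fderiv hsm]
  have hm : Differentiable ℝ (fderiv ℝ v) := (hsm.fderiv_right (m := 1) (by norm_num)).differentiable one_ne_zero
  have hbase : HasFDerivAt (fun w => fderiv ℝ v (iotaL w))
      ((fderiv ℝ (fderiv ℝ v) (iotaL z)).comp iotaL) z :=
    (hm (iotaL z)).hasFDerivAt.comp z iotaL.hasFDerivAt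
  exact (Lam e).hasFDerivAt.comp z hbase

lemma uu_fderiv2_apply (hsm : ContDiff ℝ 2 v) (z a b : ℂ) :
    fderiv ℝ (fderiv ℝ (uu v e)) z a b
      = ⟪e, fderiv ℝ (fderiv ℝ v) (iotaL z) (iotaL a) (iotaL b)⟫ := by
  rw [(uu_hasFDerivAt2 hsm z).fderiv]
  rfl

lemma vlap_eq (hsm : ContDiff ℝ 2 v) (x : E2) :
    vlap v x = fderiv ℝ (fderiv ℝ v) x (EuclideanSpace.single 0 1) (EuclideanSpace.single 0 1)
      + fderiv ℝ (fderiv ℝ v) x (EuclideanSpace.single 1 1) (EuclideanSpace.single 1 1) := by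
  have hm : Differentiable ℝ (fderiv ℝ v) := (hsm.fderiv_right (m := 1) (by norm_num)).differentiable one_ne_zero
  have key : ∀ s : E2, fderiv ℝ (fun y => fderiv ℝ v y s) x = ((ContinuousLinearMap.apply ℝ E2 s).comp (fderiv ℝ (fderiv ℝ v) x)) := by
    intro s
    exact ((ContinuousLinearMap.apply ℝ E2 s).hasFDerivAt.comp x (hm x).hasFDerivAt).fderiv
  rw [vlap, Fin.sum_univ_two, key, key]
  rfl

lemma uu_lap (hsm : ContDiff ℝ 2 v) (hharm : ∀ x : E2, 0 < x 1 → vlap v x = 0) :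
    ∀ z : ℂ, 0 < z.im →
      fderiv ℝ (fderiv ℝ (uu v e)) z 1 1
        + fderiv ℝ (fderiv ℝ (uu v e)) z Complex.I Complex.I = 0 := by
  intro z hz
  rw [uu_fderiv2_apply hsm, uu_fderiv2_apply hsm, iotaL_one, iotaL_I, ← inner_add_right]
  rw [← vlap_eq hsm]
  rw [hharm (iotaL z) (by rw [iotaL_im]; exact hz)]
  exact inner_zero_right e

end Transfer

end Aux

/-- a bounded harmonic map `v` on the upper half-plane `{x₂ > 0}` with
`⟨v, h^⊥⟩ = 0` and `∂ₙ⟨v, h⟩ = 0` on the boundary `{x₂ = 0}` is constant. -/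
theorem stmt2 (v : E2 → E2) (h : E2) (hh : ‖h‖ = 1)
    (hsm : ContDiff ℝ 2 v)
    (hharm : ∀ x : E2, 0 < x 1 → vlap v x = 0)
    (C : ℝ) (hbdd : ∀ x : E2, 0 ≤ x 1 → ‖v x‖ ≤ C)
    (hbc1 : ∀ x : E2, x 1 = 0 → ⟪v x, perp h⟫ = 0)
    (hbc2 : ∀ x : E2, x 1 = 0 →
      fderiv ℝ (fun y => ⟪v y, h⟫) x (EuclideanSpace.single 1 1) = 0) :
    ∀ x y : E2, 0 ≤ x 1 → 0 ≤ y 1 → v x = v y := by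
  have hvd : Differentiable ℝ v := hsm.differentiable (by norm_num)
  have hline : ∀ s : ℝ, (iotaL s) 1 = 0 := fun s => by rw [iotaL_im]; simp
  -- bound
  have hbound : ∀ (e : E2) (z : ℂ), 0 ≤ z.im → |uu v e z| ≤ ‖e‖ * C := by
    intro e z hz
    have h1 : |uu v e z| ≤ ‖e‖ * ‖v (iotaL z)‖ := abs_real_inner_le_norm e _
    have h2 : ‖v (iotaL z)‖ ≤ C := hbdd _ (by rw [iotaL_im]; exact hz)
    calc |uu v e z| ≤ ‖e‖ * ‖v (iotaL z)‖ := h1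
      _ ≤ ‖e‖ * C := mul_le_mul_of_nonneg_left h2 (norm_nonneg e)
  -- generic: differentiability of z ↦ fderiv (uu v e) z k, and its line-derivative identity
  have hg_eq : ∀ (e : E2) (k : ℂ) (s : ℂ),
      fderiv ℝ (fun z => fderiv ℝ (uu v e) z k) s
        = (ContinuousLinearMap.apply ℝ ℝ k).comp (fderiv ℝ (fderiv ℝ (uu v e)) s) := by
    intro e k s
    have H2 : HasFDerivAt (fderiv ℝ (uu v e)) (fderiv ℝ (fderiv ℝ (uu v e)) s) s := by
      rw [(uu_hasFDerivAt2 hsm s).fderiv]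
      exact uu_hasFDerivAt2 hsm s
    exact ((ContinuousLinearMap.apply ℝ ℝ k).hasFDerivAt.comp s H2).fderiv
  have hg_diff : ∀ (e : E2) (k : ℂ), Differentiable ℝ (fun z => fderiv ℝ (uu v e) z k) := by
    intro e k z
    have H2 : HasFDerivAt (fderiv ℝ (uu v e)) (fderiv ℝ (fderiv ℝ (uu v e)) z) z := by
      rw [(uu_hasFDerivAt2 hsm z).fderiv]
      exact uu_hasFDerivAt2 hsm z
    exact ((ContinuousLinearMap.apply ℝ ℝ k).hasFDerivAt.comp z H2).differentiableAt
  -- second derivative symmetry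
  have hsymm : ∀ (e : E2) (s : ℂ) (a b : ℂ),
      fderiv ℝ (fderiv ℝ (uu v e)) s a b = fderiv ℝ (fderiv ℝ (uu v e)) s b a := by
    intro e s a b
    have H2 : HasFDerivAt (fderiv ℝ (uu v e)) (fderiv ℝ (fderiv ℝ (uu v e)) s) s := by
      rw [(uu_hasFDerivAt2 hsm s).fderiv]
      exact uu_hasFDerivAt2 hsm s
    exact second_derivative_symmetric_of_eventually_of_real
      (Filter.Eventually.of_forall fun y =>
        (((uu_contDiff (e := e) hsm).differentiable (by norm_num)) y).hasFDerivAt) H2 a b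
  ------------------------------------------------------------------
  -- EVEN part : e = h
  ------------------------------------------------------------------
  have hD : ∀ x' : E2, fderiv ℝ (fun y => ⟪v y, h⟫) x' = (innerSL ℝ h).comp (fderiv ℝ v x') := by
    intro x'
    have hfun : (fun y => ⟪v y, h⟫) = fun y => (innerSL ℝ h) (v y) :=
      funext fun y => real_inner_comm _ _
    rw [hfun]
    exact ((innerSL ℝ h).hasFDerivAt.comp x' (hvd x').hasFDerivAt).fderiv
  have hI0 : ∀ s : ℝ, fderiv ℝ (uu v h) s Complex.I = 0 := by
    intro s
    rw [uu_fderiv hsm]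
    have := hbc2 (iotaL s) (hline s)
    rw [hD] at this
    simpa [iotaL_I] using this
  have m01 : ∀ s : ℝ, fderiv ℝ (fderiv ℝ (uu v h)) s 1 Complex.I = 0 := by
    intro s
    have := line_deriv_zero (fun z => fderiv ℝ (uu v h) z Complex.I)
      (hg_diff h Complex.I) hI0 s
    rw [hg_eq h Complex.I s] at this
    exact this
  have m10 : ∀ s : ℝ, fderiv ℝ (fderiv ℝ (uu v h)) s Complex.I 1 = 0 := by
    intro s
    rw [hsymm h s Complex.I 1]
    exact m01 s
  have hueq : ∀ a b : ℂ, 0 ≤ a.im → 0 ≤ b.im → uu v h a = uu v h b := by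
    apply reflect_liouville (uu v h) (uu_contDiff hsm) 1 (by norm_num)
      (uu_lap hsm hharm)
    · intro x; rw [one_smul]
    · intro x k
      rw [one_smul, lin_expand, lin_expand (fderiv ℝ (uu v h) x) k]
      simp [hI0 x]
    · intro x a b
      rw [one_smul, bilin_expand, bilin_expand (fderiv ℝ (fderiv ℝ (uu v h)) x) a b]
      simp [m01 x, m10 x]
    · exact hbound h
  ------------------------------------------------------------------
  -- ODD part : e = perp h
  ------------------------------------------------------------------
  have hzero_line : ∀ s : ℝ, uu v (perp h) s = 0 := by
    intro s
    have := hbc1 (iotaL s) (hline s)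
    rw [real_inner_comm] at this
    exact this
  have u'1 : ∀ s : ℝ, fderiv ℝ (uu v (perp h)) s 1 = 0 :=
    line_deriv_zero (uu v (perp h))
      ((uu_contDiff hsm).differentiable (by norm_num)) hzero_line
  have m00 : ∀ s : ℝ, fderiv ℝ (fderiv ℝ (uu v (perp h))) s 1 1 = 0 := by
    intro s
    have := line_deriv_zero (fun z => fderiv ℝ (uu v (perp h)) z 1)
      (hg_diff (perp h) 1) u'1 s
    rw [hg_eq (perp h) 1 s] at this
    exact this
  have m11 : ∀ s : ℝ, fderiv ℝ (fderiv ℝ (uu v (perp h))) s Complex.I Complex.I = 0 := by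
    intro s
    have := lap_boundary (uu v (perp h)) (uu_contDiff hsm) (uu_lap hsm hharm) s (by simp)
    have hm := m00 s
    linarith
  have hweq : ∀ a b : ℂ, 0 ≤ a.im → 0 ≤ b.im → uu v (perp h) a = uu v (perp h) b := by
    apply reflect_liouville (uu v (perp h)) (uu_contDiff hsm) (-1) (by norm_num)
      (uu_lap hsm hharm)
    · intro x
      rw [hzero_line x]; simp
    · intro x k
      rw [lin_expand, lin_expand (fderiv ℝ (uu v (perp h)) x) k]
      simp [u'1 x]
    · intro x a b
      rw [bilin_expand, bilin_expand (fderiv ℝ (fderiv ℝ (uu v (perp h))) x) a b]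
      simp [m00 x, m11 x]
      ring
    · exact hbound (perp h)
  ------------------------------------------------------------------
  -- conclusion
  ------------------------------------------------------------------
  intro x y hx hy
  set zx : ℂ := ⟨x 0, x 1⟩ with hzx
  set zy : ℂ := ⟨y 0, y 1⟩ with hzy
  have hix : iotaL zx = x := iotaL_surj x
  have hiy : iotaL zy = y := iotaL_surj y
  have hc1 : ⟪v x, h⟫ = ⟪v y, h⟫ := by
    have := hueq zx zy hx hy
    rw [real_inner_comm h (v x), real_inner_comm h (v y)]
    simpa [uu, hix, hiy] using this
  have hc2 : ⟪v x, perp h⟫ = ⟪v y, perp h⟫ := by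
    have := hweq zx zy hx hy
    rw [real_inner_comm (perp h) (v x), real_inner_comm (perp h) (v y)]
    simpa [uu, hix, hiy] using this
  conv_lhs => rw [decomp h hh (v x)]
  conv_rhs => rw [decomp h hh (v y)]
  rw [hc1, hc2]
end
end

section
/- Let u, g : Γ₀ → ℝ² with |g| = 1, |u| ≥ 1/2, and write u/|u| = e^{iψ}, g = e^{iγ} for continuous liftings ψ, γ on a boundary arc Γ₀. Suppose ψ − γ = Dθ + γ₀ − γ + φ (some representation) and that |φ| ≤ π/4 on Γ₀, that |sin(Dθ+γ₀−γ)| ≤ Cρ and |cos(Dθ+γ₀−γ)| ≥ 1/2 on Γ₀. Then |⟨u, g^⊥⟩| ≥ (1/8)|φ| − (C/2)ρ on Γ₀. -/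
open Set Real

noncomputable section

/-- The real inner product of two complex numbers viewed as vectors of ℝ². -/
def rinner (a b : ℂ) : ℝ := a.re * b.re + a.im * b.im

/-- core estimate of Proposition 5.1.  With `u = |u|e^{iψ}`,
`g = e^{iγ}`, `ψ = Dθ + γ₀ + φ`, `|φ| ≤ π/4`, `|sin(Dθ+γ₀−γ)| ≤ Cρ` and
`|cos(Dθ+γ₀−γ)| ≥ 1/2`, one has `|⟨u, g^⊥⟩| ≥ (1/8)|φ| − (C/2)ρ` on `Γ₀`. -/
theorem stmt16 {α : Type*} (Γ₀ : Set α)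
    (u g : α → ℂ) (ψ γ θ φ ρ : α → ℝ) (D : ℤ) (γ₀ C : ℝ) (hC : 0 ≤ C)
    (hu2 : ∀ x ∈ Γ₀, (1 : ℝ) / 2 ≤ ‖u x‖)
    (hu : ∀ x ∈ Γ₀, u x = ((‖u x‖ : ℝ) : ℂ) * Complex.exp (((ψ x : ℝ) : ℂ) * Complex.I))
    (hg : ∀ x ∈ Γ₀, g x = Complex.exp (((γ x : ℝ) : ℂ) * Complex.I))
    (hrep : ∀ x ∈ Γ₀, ψ x = (D : ℝ) * θ x + γ₀ + φ x)
    (hφ : ∀ x ∈ Γ₀, |φ x| ≤ π / 4)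
    (hρ : ∀ x ∈ Γ₀, 0 ≤ ρ x)
    (hsin : ∀ x ∈ Γ₀, |Real.sin ((D : ℝ) * θ x + γ₀ - γ x)| ≤ C * ρ x)
    (hcos : ∀ x ∈ Γ₀, (1 : ℝ) / 2 ≤ |Real.cos ((D : ℝ) * θ x + γ₀ - γ x)|) :
    ∀ x ∈ Γ₀, (1 / 8) * |φ x| - (C / 2) * ρ x ≤ |rinner (u x) (Complex.I * g x)| := by
  intro x hx
  have hr := hu2 x hx
  set r := ‖u x‖ with hrdef
  have key : rinner (u x) (Complex.I * g x)
      = r * Real.sin (((D : ℝ) * θ x + γ₀ - γ x) + φ x) := by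
    rw [hu x hx, hg x hx]
    have hsum : ψ x - γ x = ((D : ℝ) * θ x + γ₀ - γ x) + φ x := by
      rw [hrep x hx]; ring
    rw [← hsum]
    simp [rinner, Complex.exp_mul_I, Complex.mul_re, Complex.mul_im,
      Complex.cos_ofReal_re, Complex.sin_ofReal_re, Real.sin_sub]
    ring
  set a := (D : ℝ) * θ x + γ₀ - γ x with ha
  have hsin' := hsin x hx
  have hcos' := hcos x hx
  have hφ' := hφ x hx
  have hρ' := hρ x hx
  -- |sin φ| ≥ |φ|/2
  have h1 : |φ x| / 2 ≤ |Real.sin (φ x)| := by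
    have habs : |Real.sin (φ x)| = |Real.sin (|φ x|)| := by
      rcases abs_cases (φ x) with ⟨h, _⟩ | ⟨h, _⟩ <;> rw [h] <;> simp
    have hle : |φ x| ≤ π / 2 := le_trans hφ' (by linarith [Real.pi_pos])
    have hms := Real.mul_le_sin (abs_nonneg (φ x)) hle
    have hhalf : (1 : ℝ) / 2 ≤ 2 / π := by
      rw [div_le_div_iff₀ two_pos Real.pi_pos]
      linarith [Real.pi_le_four]
    have hh : |φ x| / 2 ≤ 2 / π * |φ x| := by
      rw [div_eq_mul_inv, mul_comm]
      exact mul_le_mul_of_nonneg_right (by linarith) (abs_nonneg _)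
    calc |φ x| / 2 ≤ 2 / π * |φ x| := hh
      _ ≤ Real.sin (|φ x|) := hms
      _ ≤ |Real.sin (|φ x|)| := le_abs_self _
      _ = |Real.sin (φ x)| := habs.symm
  have hexp : Real.sin (a + φ x)
      = Real.sin a * Real.cos (φ x) + Real.cos a * Real.sin (φ x) := Real.sin_add _ _
  have h2 : |Real.cos a * Real.sin (φ x)| - |Real.sin a * Real.cos (φ x)|
      ≤ |Real.sin (a + φ x)| := by
    have h := abs_sub_abs_le_abs_sub (Real.cos a * Real.sin (φ x))
      (-(Real.sin a * Real.cos (φ x)))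
    rw [abs_neg, sub_neg_eq_add, add_comm] at h
    rw [hexp]
    exact h
  have hca : (1:ℝ)/2 * |Real.sin (φ x)| ≤ |Real.cos a * Real.sin (φ x)| := by
    rw [abs_mul]
    exact mul_le_mul_of_nonneg_right hcos' (abs_nonneg _)
  have hsa : |Real.sin a * Real.cos (φ x)| ≤ C * ρ x := by
    rw [abs_mul]
    calc |Real.sin a| * |Real.cos (φ x)| ≤ |Real.sin a| * 1 :=
          mul_le_mul_of_nonneg_left (Real.abs_cos_le_one _) (abs_nonneg _)
      _ = |Real.sin a| := mul_one _
      _ ≤ C * ρ x := hsin'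
  have hlb : |φ x| / 4 - C * ρ x ≤ |Real.sin (a + φ x)| := by nlinarith
  rw [key, abs_mul, abs_of_nonneg (by linarith : (0:ℝ) ≤ r)]
  nlinarith [abs_nonneg (Real.sin (a + φ x)), mul_nonneg hC hρ']
end
end
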